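/- arXiv:2601.15194 — 4 statements merged into one kernel-verified Lean document; each statement's English description precedes it below -/
import Mathlib

section
/- For all x in [0,1], the binary entropy function satisfies (4 log 2)·x(1−x) ≤ h₂(x) ≤ (e log 2)·(x(1−x))^{1/log 4}, where h₂(x) = −x log x − (1−x) log(1−x) (with natural logarithm and h₂(0)=h₂(1)=0). -/
open Real Set

/-- If the derivative of `f` is "positive-then-negative" on `(a,b)`, then `f` on `[a,b]`
is at least the min of its endpoint values. -/
lemma minPrinciple {f φ : ℝ → ℝ} {a b : ℝ}
    (hc : ContinuousOn f (Icc a b))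
    (hd : ∀ t ∈ Ioo a b, HasDerivAt f (φ t) t)
    (hsign : ∀ s ∈ Ioo a b, ∀ t ∈ Ioo a b, s ≤ t → 0 < φ t → 0 ≤ φ s) :
    ∀ x ∈ Icc a b, min (f a) (f b) ≤ f x := by
  intro x hx
  rcases eq_or_lt_of_le hx.1 with rfl | hax
  · exact min_le_left _ _
  rcases eq_or_lt_of_le hx.2 with rfl | hxb
  · exact min_le_right _ _
  have hxI : x ∈ Ioo a b := ⟨hax, hxb⟩
  by_cases hpos : ∀ s ∈ Ioo a x, 0 ≤ φ s
  · -- f monotone on [a, x]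
    have hmono : MonotoneOn f (Icc a x) := by
      apply monotoneOn_of_deriv_nonneg (convex_Icc a x)
        (hc.mono (Icc_subset_Icc le_rfl hx.2))
      · intro s hs
        rw [interior_Icc] at hs
        exact ((hd s ⟨hs.1, hs.2.trans hxb⟩).differentiableAt).differentiableWithinAt
      · intro s hs
        rw [interior_Icc] at hs
        rw [(hd s ⟨hs.1, hs.2.trans hxb⟩).deriv]
        exact hpos s hs
    have := hmono ⟨le_rfl, hax.le⟩ ⟨hax.le, le_rfl⟩ hax.le
    exact le_trans (min_le_left _ _) this
  · push_neg at hpos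
    obtain ⟨s₀, hs₀, hs₀neg⟩ := hpos
    have hs₀I : s₀ ∈ Ioo a b := ⟨hs₀.1, hs₀.2.trans hxb⟩
    -- φ ≤ 0 on (x, b), in fact on [s₀, b)
    have hanti : AntitoneOn f (Icc x b) := by
      apply antitoneOn_of_deriv_nonpos (convex_Icc x b)
        (hc.mono (Icc_subset_Icc hx.1 le_rfl))
      · intro s hs
        rw [interior_Icc] at hs
        exact ((hd s ⟨hax.trans hs.1, hs.2⟩).differentiableAt).differentiableWithinAt
      · intro s hs
        rw [interior_Icc] at hs
        have hsI : s ∈ Ioo a b := ⟨hax.trans hs.1, hs.2⟩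
        rw [(hd s hsI).deriv]
        by_contra hgt
        push_neg at hgt
        exact absurd (hsign s₀ hs₀I s hsI (hs₀.2.le.trans hs.1.le) hgt) (not_le.2 hs₀neg)
    have := hanti ⟨le_rfl, hx.2⟩ ⟨hx.2, le_rfl⟩ hx.2
    exact le_trans (min_le_right _ _) this
open Real Set

/-- If `f a = 0` and the derivative of `f` is positive-then-negative on `(a,b)`,
then `f` itself is positive-then-negative on `(a,b)`. -/
lemma posThenNeg {f φ : ℝ → ℝ} {a b : ℝ}
    (hc : ContinuousOn f (Ico a b))
    (hd : ∀ t ∈ Ioo a b, HasDerivAt f (φ t) t)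
    (hsign : ∀ s ∈ Ioo a b, ∀ t ∈ Ioo a b, s ≤ t → 0 < φ t → 0 ≤ φ s)
    (hfa : f a = 0) :
    ∀ s ∈ Ioo a b, ∀ t ∈ Ioo a b, s ≤ t → 0 < f t → 0 ≤ f s := by
  intro s hs t ht hst hft
  by_contra hneg
  push_neg at hneg
  -- MVT on [a, s] gives a point with negative derivative
  obtain ⟨u, hu, huder⟩ := exists_hasDerivAt_eq_slope f φ hs.1
    (hc.mono (Icc_subset_Ico_right hs.2))
    (fun v hv => hd v ⟨hv.1, hv.2.trans hs.2⟩)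
  have huneg : φ u < 0 := by
    rw [huder, hfa, sub_zero]
    exact div_neg_of_neg_of_pos hneg (by linarith [hu.1, hu.2])
  have huI : u ∈ Ioo a b := ⟨hu.1, hu.2.trans hs.2⟩
  -- f is antitone on [u, t]
  have hanti : AntitoneOn f (Icc u t) := by
    apply antitoneOn_of_deriv_nonpos (convex_Icc u t)
      (hc.mono (fun v hv => ⟨le_of_lt (lt_of_lt_of_le huI.1 hv.1), lt_of_le_of_lt hv.2 ht.2⟩))
    · intro v hv
      rw [interior_Icc] at hv
      exact ((hd v ⟨huI.1.trans hv.1, hv.2.trans ht.2⟩).differentiableAt).differentiableWithinAt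
    · intro v hv
      rw [interior_Icc] at hv
      have hvI : v ∈ Ioo a b := ⟨huI.1.trans hv.1, hv.2.trans ht.2⟩
      rw [(hd v hvI).deriv]
      by_contra hgt
      push_neg at hgt
      exact absurd (hsign u huI v hvI (le_of_lt hv.1) hgt) (not_le.2 huneg)
  have h1 : f t ≤ f s := hanti ⟨hu.2.le, hst⟩ ⟨hu.2.le.trans hst, le_rfl⟩ hst
  linarith
open Real Set

noncomputable def fA (t : ℝ) : ℝ := (Real.log (1+t) - Real.log (1-t)) / 2
noncomputable def fE (t : ℝ) : ℝ := (1+t) * Real.log (1+t) + (1-t) * Real.log (1-t)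

lemma fA_zero : fA 0 = 0 := by simp [fA]
lemma fE_zero : fE 0 = 0 := by simp [fE]
lemma fE_one : fE 1 = 2 * Real.log 2 := by norm_num [fE]

lemma hasDerivAt_fA {t : ℝ} (ht : t ∈ Ioo (-1:ℝ) 1) :
    HasDerivAt fA (1/(1-t^2)) t := by
  have h1 : (0:ℝ) < 1 + t := by linarith [ht.1]
  have h2 : (0:ℝ) < 1 - t := by linarith [ht.2]
  have d1 : HasDerivAt (fun t : ℝ => Real.log (1+t)) (1/(1+t)) t := by
    simpa using (((hasDerivAt_id t).const_add 1).log h1.ne')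
  have d2 : HasDerivAt (fun t : ℝ => Real.log (1-t)) (-1/(1-t)) t := by
    simpa using (((hasDerivAt_id t).const_sub 1).log h2.ne')
  have := (d1.sub d2).div_const 2
  refine this.congr_deriv ?_
  have h3 : (1:ℝ) - t^2 ≠ 0 := by nlinarith [ht.1, ht.2]
  field_simp
  ring

lemma hasDerivAt_fE {t : ℝ} (ht : t ∈ Ioo (-1:ℝ) 1) :
    HasDerivAt fE (2 * fA t) t := by
  have h1 : (0:ℝ) < 1 + t := by linarith [ht.1]
  have h2 : (0:ℝ) < 1 - t := by linarith [ht.2]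
  have i1 : HasDerivAt (fun t : ℝ => 1 + t) 1 t := (hasDerivAt_id t).const_add 1
  have i2 : HasDerivAt (fun t : ℝ => 1 - t) (-1) t := by
    simpa using (hasDerivAt_id t).const_sub 1
  have d1 : HasDerivAt (fun t : ℝ => Real.log (1+t)) (1/(1+t)) t := by
    simpa using i1.log h1.ne'
  have d2 : HasDerivAt (fun t : ℝ => Real.log (1-t)) (-1/(1-t)) t := by
    simpa using i2.log h2.ne'
  have := (i1.mul d1).add (i2.mul d2)
  refine this.congr_deriv ?_
  unfold fA
  field_simp
  ring

lemma continuous_fE : Continuous fE := by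
  have : fE = fun t => (fun z => z * Real.log z) (1+t) + (fun z => z * Real.log z) (1-t) := rfl
  rw [this]
  exact (Real.continuous_mul_log.comp (continuous_const.add continuous_id)).add
    (Real.continuous_mul_log.comp (continuous_const.sub continuous_id))

lemma continuousOn_fA : ContinuousOn fA (Ioo (-1:ℝ) 1) :=
  fun t ht => ((hasDerivAt_fA ht).continuousAt).continuousWithinAt

-- t ≤ fA t on [0, 1)
lemma fA_ge {t : ℝ} (ht : t ∈ Ico (0:ℝ) 1) : t ≤ fA t := by
  have hsub : Ico (0:ℝ) 1 ⊆ Ioo (-1:ℝ) 1 := fun s hs => ⟨by linarith [hs.1], hs.2⟩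
  have hmono : MonotoneOn (fun t => fA t - t) (Ico (0:ℝ) 1) := by
    apply monotoneOn_of_deriv_nonneg (convex_Ico 0 1)
      (((continuousOn_fA.mono hsub).sub continuousOn_id))
    · intro s hs
      rw [interior_Ico] at hs
      exact (((hasDerivAt_fA (hsub (Ioo_subset_Ico_self hs))).sub (hasDerivAt_id s)).differentiableAt).differentiableWithinAt
    · intro s hs
      rw [interior_Ico] at hs
      have hsI : s ∈ Ioo (-1:ℝ) 1 := ⟨by linarith [hs.1], hs.2⟩
      rw [((hasDerivAt_fA hsI).sub (hasDerivAt_id s)).deriv]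
      have h2 : (0:ℝ) < 1 - s^2 := by nlinarith [hs.1, hs.2]
      have : (1:ℝ) - s^2 ≤ 1 := by nlinarith [hs.1]
      have h3 : (1:ℝ) ≤ 1/(1-s^2) := by
        rw [le_div_iff₀ h2]; linarith
      simpa using h3
  have := hmono ⟨le_rfl, one_pos⟩ ht ht.1
  simp only [fA_zero] at this
  linarith [this]

-- fA t ≤ t / (1 - t^2) on [0, 1)
lemma fA_le {t : ℝ} (ht : t ∈ Ico (0:ℝ) 1) : fA t ≤ t / (1 - t^2) := by
  have hsub : Ico (0:ℝ) 1 ⊆ Ioo (-1:ℝ) 1 := fun s hs => ⟨by linarith [hs.1], hs.2⟩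
  have hder : ∀ s ∈ Ioo (-1:ℝ) 1, HasDerivAt (fun t : ℝ => t/(1-t^2) - fA t)
      (2*s^2/(1-s^2)^2) s := by
    intro s hsI
    have h2 : (0:ℝ) < 1 - s^2 := by nlinarith [hsI.1, hsI.2]
    have dq : HasDerivAt (fun t : ℝ => 1 - t^2) (-(2*s)) s := by
      simpa using ((hasDerivAt_pow 2 s).const_sub 1)
    have dd : HasDerivAt (fun t : ℝ => t/(1-t^2))
        ((1*(1-s^2) - s*(-(2*s)))/(1-s^2)^2) s := (hasDerivAt_id s).div dq h2.ne'
    have := dd.sub (hasDerivAt_fA hsI)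
    refine this.congr_deriv ?_
    field_simp
    ring
  have hmono : MonotoneOn (fun t : ℝ => t/(1-t^2) - fA t) (Ico (0:ℝ) 1) := by
    apply monotoneOn_of_deriv_nonneg (convex_Ico 0 1)
    · intro s hs
      have h2 : (0:ℝ) < 1 - s^2 := by nlinarith [hs.1, hs.2]
      exact ((hder s (hsub hs)).continuousAt).continuousWithinAt
    · intro s hs
      rw [interior_Ico] at hs
      exact ((hder s (hsub (Ioo_subset_Ico_self hs))).differentiableAt).differentiableWithinAt
    · intro s hs
      rw [interior_Ico] at hs
      rw [(hder s (hsub (Ioo_subset_Ico_self hs))).deriv]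
      have h2 : (0:ℝ) < 1 - s^2 := by nlinarith [hs.1, hs.2]
      positivity
  have := hmono ⟨le_rfl, one_pos⟩ ht ht.1
  simp only [fA_zero] at this
  norm_num at this
  linarith [this]
-- fA t / t is monotone: t * fA s ≤ s * fA t for 0 < s ≤ t < 1
lemma fA_ratio_mono {s t : ℝ} (hs : s ∈ Ioo (0:ℝ) 1) (ht : t ∈ Ioo (0:ℝ) 1) (hst : s ≤ t) :
    t * fA s ≤ s * fA t := by
  have hsub : Ioo (0:ℝ) 1 ⊆ Ioo (-1:ℝ) 1 := fun u hu => ⟨by linarith [hu.1], hu.2⟩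
  have hder : ∀ u ∈ Ioo (0:ℝ) 1, HasDerivAt (fun v : ℝ => fA v / v)
      ((u/(1-u^2) - fA u)/u^2) u := by
    intro u hu
    have := (hasDerivAt_fA (hsub hu)).div (hasDerivAt_id u) (ne_of_gt hu.1)
    refine this.congr_deriv ?_
    have h2 : (1:ℝ) - u^2 ≠ 0 := by nlinarith [hu.1, hu.2]
    simp only [id]
    field_simp
  have hmono : MonotoneOn (fun v : ℝ => fA v / v) (Ioo (0:ℝ) 1) := by
    apply monotoneOn_of_deriv_nonneg (convex_Ioo 0 1)
    · exact fun u hu => ((hder u hu).continuousAt).continuousWithinAt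
    · intro u hu
      rw [interior_Ioo] at hu
      exact ((hder u hu).differentiableAt).differentiableWithinAt
    · intro u hu
      rw [interior_Ioo] at hu
      rw [(hder u hu).deriv]
      have h1 : fA u ≤ u / (1-u^2) := fA_le ⟨hu.1.le, hu.2⟩
      apply div_nonneg (by linarith) (by positivity)
  have := hmono hs ht hst
  rw [div_le_div_iff₀ hs.1 ht.1] at this
  linarith
-- R t = fA t * (1-t^2) / t is antitone (cleared form)
lemma fR_anti {s t : ℝ} (hs : s ∈ Ioo (0:ℝ) 1) (ht : t ∈ Ioo (0:ℝ) 1) (hst : s ≤ t) :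
    fA t * (1-t^2) * s ≤ fA s * (1-s^2) * t := by
  have hsub : Ioo (0:ℝ) 1 ⊆ Ioo (-1:ℝ) 1 := fun u hu => ⟨by linarith [hu.1], hu.2⟩
  have hder : ∀ u ∈ Ioo (0:ℝ) 1, HasDerivAt (fun v : ℝ => fA v * (1-v^2) / v)
      ((u - fA u * (1+u^2))/u^2) u := by
    intro u hu
    have h2 : (1:ℝ) - u^2 ≠ 0 := by nlinarith [hu.1, hu.2]
    have dq : HasDerivAt (fun v : ℝ => 1 - v^2) (-(2*u)) u := by
      simpa using ((hasDerivAt_pow 2 u).const_sub 1)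
    have dnum : HasDerivAt (fun v : ℝ => fA v * (1-v^2))
        (1/(1-u^2) * (1-u^2) + fA u * (-(2*u))) u := (hasDerivAt_fA (hsub hu)).mul dq
    have := dnum.div (hasDerivAt_id u) (ne_of_gt hu.1)
    refine this.congr_deriv ?_
    simp only [id]
    field_simp
    ring
  have hanti : AntitoneOn (fun v : ℝ => fA v * (1-v^2) / v) (Ioo (0:ℝ) 1) := by
    apply antitoneOn_of_deriv_nonpos (convex_Ioo 0 1)
    · exact fun u hu => ((hder u hu).continuousAt).continuousWithinAt
    · intro u hu
      rw [interior_Ioo] at hu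
      exact ((hder u hu).differentiableAt).differentiableWithinAt
    · intro u hu
      rw [interior_Ioo] at hu
      rw [(hder u hu).deriv]
      have h1 : u ≤ fA u := fA_ge ⟨hu.1.le, hu.2⟩
      have h3 : u * (1+u^2) ≤ fA u * (1+u^2) := by nlinarith [hu.1]
      have h4 : u ≤ u * (1+u^2) := by nlinarith [hu.1]
      apply div_nonpos_of_nonpos_of_nonneg (by linarith) (by positivity)
  have := hanti hs ht hst
  rw [div_le_div_iff₀ ht.1 hs.1] at this
  linarith
lemma log2_pos : (0:ℝ) < Real.log 2 := Real.log_pos (by norm_num)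
lemma log2_lt : Real.log 2 < 0.6931471808 := Real.log_two_lt_d9
lemma log2_gt : 0.6931471803 < Real.log 2 := Real.log_two_gt_d9

noncomputable def fM (t : ℝ) : ℝ := 2 * Real.log 2 * t^2 - fE t

lemma fM_nonneg {t : ℝ} (ht : t ∈ Icc (0:ℝ) 1) : 0 ≤ fM t := by
  have hsub : Ioo (0:ℝ) 1 ⊆ Ioo (-1:ℝ) 1 := fun u hu => ⟨by linarith [hu.1], hu.2⟩
  have key := minPrinciple (f := fM) (φ := fun t => 4 * Real.log 2 * t - 2 * fA t)
    (a := 0) (b := 1) ?_ ?_ ?_ t ht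
  · have h0 : fM 0 = 0 := by simp [fM, fE_zero]
    have h1 : fM 1 = 0 := by norm_num [fM, fE_one]
    rw [h0, h1] at key
    simpa using key
  · apply Continuous.continuousOn
    exact (continuous_const.mul (continuous_pow 2)).sub continuous_fE
  · intro u hu
    have hd2 : HasDerivAt (fun t : ℝ => 2 * Real.log 2 * t^2) (2 * Real.log 2 * (2*u)) u := by
      simpa using ((hasDerivAt_pow 2 u).const_mul (2 * Real.log 2))
    have := hd2.sub (hasDerivAt_fE (hsub hu))
    refine this.congr_deriv ?_
    ring
  · intro s hs u hu hsu hpos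
    have hratio := fA_ratio_mono hs hu hsu
    by_contra hneg
    push_neg at hneg
    have e1 : fA u < 2*Real.log 2*u := by linarith
    have e2 : 2*Real.log 2*s < fA s := by linarith
    have e3 := mul_lt_mul_of_pos_left e1 hs.1
    have e4 := mul_lt_mul_of_pos_left e2 hu.1
    nlinarith [hratio]

noncomputable def fK (t : ℝ) : ℝ :=
  Real.log 2 * ((1-t^2) * fA t) - t * (Real.log 2 - fE t / 2)
noncomputable def fK' (t : ℝ) : ℝ := (1-2*Real.log 2) * (t * fA t) + fE t / 2
noncomputable def fK'' (t : ℝ) : ℝ :=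
  (2-2*Real.log 2) * fA t + (1-2*Real.log 2) * (t/(1-t^2))

lemma hasDerivAt_fK {t : ℝ} (ht : t ∈ Ioo (-1:ℝ) 1) : HasDerivAt fK (fK' t) t := by
  have h2 : (1:ℝ) - t^2 ≠ 0 := by nlinarith [ht.1, ht.2]
  have dq : HasDerivAt (fun v : ℝ => 1 - v^2) (-(2*t)) t := by
    simpa using ((hasDerivAt_pow 2 t).const_sub 1)
  have dnum : HasDerivAt (fun v : ℝ => (1-v^2) * fA v)
      (-(2*t) * fA t + (1-t^2) * (1/(1-t^2))) t := dq.mul (hasDerivAt_fA ht)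
  have dg : HasDerivAt (fun v : ℝ => Real.log 2 - fE v / 2) (-(2 * fA t / 2)) t :=
    ((hasDerivAt_fE ht).div_const 2).const_sub (Real.log 2)
  have := (dnum.const_mul (Real.log 2)).sub ((hasDerivAt_id t).mul dg)
  refine this.congr_deriv ?_
  unfold fK'
  simp only [id]
  field_simp
  ring

lemma hasDerivAt_fK' {t : ℝ} (ht : t ∈ Ioo (-1:ℝ) 1) :
    HasDerivAt fK' (fK'' t) t := by
  have h2 : (1:ℝ) - t^2 ≠ 0 := by nlinarith [ht.1, ht.2]
  have d1 : HasDerivAt (fun v : ℝ => v * fA v) (1 * fA t + t * (1/(1-t^2))) t :=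
    (hasDerivAt_id t).mul (hasDerivAt_fA ht)
  have := (d1.const_mul (1-2*Real.log 2)).add ((hasDerivAt_fE ht).div_const 2)
  refine this.congr_deriv ?_
  unfold fK'' fA
  field_simp
  ring

lemma fK''_sign {s t : ℝ} (hs : s ∈ Ioo (0:ℝ) 1) (ht : t ∈ Ioo (0:ℝ) 1) (hst : s ≤ t)
    (hpos : 0 < fK'' t) : 0 ≤ fK'' s := by
  have h2s : (0:ℝ) < 1 - s^2 := by nlinarith [hs.1, hs.2]
  have h2t : (0:ℝ) < 1 - t^2 := by nlinarith [ht.1, ht.2]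
  have hR := fR_anti hs ht hst
  have hL1 : (0:ℝ) < 2 - 2*Real.log 2 := by nlinarith [log2_lt]
  have hL2 : (0:ℝ) < 2*Real.log 2 - 1 := by nlinarith [log2_gt]
  have hexp : fK'' s = ((2-2*Real.log 2) * (fA s * (1-s^2)) + (1-2*Real.log 2) * s)/(1-s^2) := by
    unfold fK''
    field_simp
  rw [hexp]
  apply div_nonneg _ h2s.le
  have hexpt : 0 < (2-2*Real.log 2) * (fA t * (1-t^2)) + (1-2*Real.log 2) * t := by
    have : fK'' t * (1-t^2) = (2-2*Real.log 2) * (fA t * (1-t^2)) + (1-2*Real.log 2) * t := by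
      unfold fK''
      field_simp
    nlinarith [mul_pos hpos h2t]
  by_contra hneg
  push_neg at hneg
  have e1 := mul_lt_mul_of_pos_right hexpt hs.1
  have e2 := mul_lt_mul_of_pos_right hneg ht.1
  have e3 := mul_le_mul_of_nonneg_left hR hL1.le
  rw [zero_mul] at e1 e2
  nlinarith [e1, e2, e3]

lemma fK_nonneg {t : ℝ} (ht : t ∈ Icc (0:ℝ) 1) : 0 ≤ fK t := by
  have hsub : Ioo (0:ℝ) 1 ⊆ Ioo (-1:ℝ) 1 := fun u hu => ⟨by linarith [hu.1], hu.2⟩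
  have hsub' : Ico (0:ℝ) 1 ⊆ Ioo (-1:ℝ) 1 := fun u hu => ⟨by linarith [hu.1], hu.2⟩
  have hK'sign : ∀ s ∈ Ioo (0:ℝ) 1, ∀ u ∈ Ioo (0:ℝ) 1, s ≤ u → 0 < fK' u → 0 ≤ fK' s := by
    apply posThenNeg (φ := fK'')
    · exact fun u hu => ((hasDerivAt_fK' (hsub' hu)).continuousAt).continuousWithinAt
    · exact fun u hu => hasDerivAt_fK' (hsub hu)
    · exact fun s hs u hu hsu hpos => fK''_sign hs hu hsu hpos
    · simp [fK', fA_zero, fE_zero]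
  have key := minPrinciple (f := fK) (φ := fK') (a := 0) (b := 1) ?_ ?_ hK'sign t ht
  · have h0 : fK 0 = 0 := by simp [fK, fA_zero, fE_zero]
    have h1 : fK 1 = 0 := by
      simp [fK, fE_one]
    rw [h0, h1] at key
    simpa using key
  · -- continuity of fK on [0,1]
    have heq : fK = fun t => Real.log 2 * (((1-t) * ((1+t) * Real.log (1+t))
        - (1+t) * ((1-t) * Real.log (1-t)))/2) - t * (Real.log 2 - fE t / 2) := by
      funext u
      unfold fK fA
      ring
    rw [heq]
    apply Continuous.continuousOn
    have c1 : Continuous fun t : ℝ => (1+t) * Real.log (1+t) :=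
      Real.continuous_mul_log.comp (continuous_const.add continuous_id)
    have c2 : Continuous fun t : ℝ => (1-t) * Real.log (1-t) :=
      Real.continuous_mul_log.comp (continuous_const.sub continuous_id)
    have c3 : Continuous fun t : ℝ => ((1-t) * ((1+t) * Real.log (1+t))
        - (1+t) * ((1-t) * Real.log (1-t)))/2 :=
      (((continuous_const.sub continuous_id).mul c1).sub
        ((continuous_const.add continuous_id).mul c2)).div_const 2
    exact (continuous_const.mul c3).sub
      (continuous_id.mul (continuous_const.sub (continuous_fE.div_const 2)))
  · exact fun u hu => hasDerivAt_fK (hsub hu)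
noncomputable def binEnt (x : ℝ) : ℝ := -(x * Real.log x) - (1 - x) * Real.log (1 - x)

lemma binEnt_eq : binEnt = Real.binEntropy := by
  funext x
  simp [binEnt, Real.binEntropy, Real.log_inv]
  ring

lemma binEnt_symm (x : ℝ) : binEnt (1 - x) = binEnt x := by
  unfold binEnt
  ring_nf

lemma fE_binEnt {x : ℝ} (hx : x ∈ Ioo (0:ℝ) 1) :
    fE (1 - 2*x) = 2 * Real.log 2 - 2 * binEnt x := by
  unfold fE binEnt
  rw [show (1:ℝ) + (1 - 2*x) = 2*(1-x) by ring, show (1:ℝ) - (1 - 2*x) = 2*x by ring,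
    Real.log_mul two_ne_zero (by linarith [hx.2] : (1:ℝ)-x ≠ 0),
    Real.log_mul two_ne_zero (ne_of_gt hx.1)]
  ring

lemma fA_id {x : ℝ} (hx : x ∈ Ioo (0:ℝ) 1) :
    fA (1 - 2*x) = (Real.log (1-x) - Real.log x)/2 := by
  unfold fA
  rw [show (1:ℝ) + (1 - 2*x) = 2*(1-x) by ring, show (1:ℝ) - (1 - 2*x) = 2*x by ring,
    Real.log_mul two_ne_zero (by linarith [hx.2] : (1:ℝ)-x ≠ 0),
    Real.log_mul two_ne_zero (ne_of_gt hx.1)]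
  ring

lemma fM_even (t : ℝ) : fM (-t) = fM t := by
  unfold fM fE
  ring_nf

lemma lower_bound {x : ℝ} (hx : x ∈ Ioo (0:ℝ) 1) :
    (4 * Real.log 2) * (x * (1 - x)) ≤ binEnt x := by
  have hM : 0 ≤ fM (1 - 2*x) := by
    rcases le_or_gt x (1/2) with h | h
    · exact fM_nonneg ⟨by linarith, by linarith [hx.1]⟩
    · rw [show (1:ℝ) - 2*x = -(2*x-1) by ring, fM_even]
      exact fM_nonneg ⟨by linarith, by linarith [hx.2]⟩
  unfold fM at hM
  rw [fE_binEnt hx] at hM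
  nlinarith [hM]

lemma log_four : Real.log 4 = 2 * Real.log 2 := by
  rw [show (4:ℝ) = 2^2 by norm_num, Real.log_pow]
  norm_num

lemma upper_half {x : ℝ} (hx : x ∈ Ioc (0:ℝ) (1/2)) :
    binEnt x ≤ Real.exp 1 * Real.log 2 * (x * (1 - x)) ^ (1 / Real.log 4) := by
  set c : ℝ := (2 * Real.log 2)⁻¹ with hc
  have h2L : (0:ℝ) < 2 * Real.log 2 := by linarith [log2_pos]
  have hcont : Continuous binEnt := by rw [binEnt_eq]; exact Real.binEntropy_continuous
  set G : ℝ → ℝ := fun x => c * (Real.log x + Real.log (1-x)) - Real.log (binEnt x) with hG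
  have hbpos : ∀ y ∈ Ioc (0:ℝ) (1/2), 0 < binEnt y := by
    intro y hy
    rw [binEnt_eq]
    exact Real.binEntropy_pos hy.1 (by linarith [hy.2])
  have hder : ∀ y ∈ Ioo (0:ℝ) (1/2), HasDerivAt G
      (c * (1/y - 1/(1-y)) - (Real.log (1-y) - Real.log y)/binEnt y) y := by
    intro y hy
    have hy0 : (0:ℝ) < y := hy.1
    have hy1 : (0:ℝ) < 1 - y := by linarith [hy.2]
    have d1 : HasDerivAt (fun z : ℝ => Real.log z) (1/y) y := by
      simpa [one_div] using Real.hasDerivAt_log hy0.ne'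
    have d2 : HasDerivAt (fun z : ℝ => Real.log (1-z)) (-1/(1-y)) y := by
      simpa using (((hasDerivAt_id y).const_sub 1).log hy1.ne')
    have dbe : HasDerivAt binEnt (Real.log (1-y) - Real.log y) y := by
      rw [binEnt_eq]
      exact Real.hasDerivAt_binEntropy hy0.ne' (by linarith [hy.2] : y ≠ 1)
    have d3 : HasDerivAt (fun z : ℝ => Real.log (binEnt z))
        ((Real.log (1-y) - Real.log y)/binEnt y) y :=
      dbe.log (ne_of_gt (hbpos y ⟨hy.1, hy.2.le⟩))
    have := ((d1.add d2).const_mul c).sub d3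
    refine this.congr_deriv ?_
    ring
  have hG'le : ∀ y ∈ Ioo (0:ℝ) (1/2),
      c * (1/y - 1/(1-y)) - (Real.log (1-y) - Real.log y)/binEnt y ≤ 0 := by
    intro y hy
    have hy0 : (0:ℝ) < y := hy.1
    have hy1 : (0:ℝ) < 1 - y := by linarith [hy.2]
    have hh : 0 < binEnt y := hbpos y ⟨hy.1, hy.2.le⟩
    have hyI : y ∈ Ioo (0:ℝ) 1 := ⟨hy.1, by linarith [hy.2]⟩
    set D : ℝ := Real.log (1-y) - Real.log y with hD
    have hKfact : fK (1 - 2*y) = 2*Real.log 2*(y*(1-y))*D - (1-2*y)*binEnt y := by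
      unfold fK
      rw [fA_id hyI, fE_binEnt hyI]
      ring
    have hK : 0 ≤ fK (1 - 2*y) := fK_nonneg ⟨by linarith [hy.2], by linarith [hy.1]⟩
    rw [hKfact] at hK
    have h1 : (1-2*y)*binEnt y ≤ 2*Real.log 2*(y*(1-y))*D := by linarith
    rw [sub_nonpos]
    have hxx : (0:ℝ) < y*(1-y) := mul_pos hy0 hy1
    have e1 : (1/y - 1/(1-y)) = (1-2*y)/(y*(1-y)) := by
      field_simp
      ring
    rw [e1, ← mul_div_assoc, div_le_div_iff₀ hxx hh]
    have h2 : c*((1-2*y)*binEnt y) ≤ c*(2*Real.log 2*(y*(1-y))*D) :=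
      mul_le_mul_of_nonneg_left h1 (inv_nonneg.2 h2L.le)
    have h3 : c*(2*Real.log 2*(y*(1-y))*D) = D*(y*(1-y)) := by
      rw [hc]
      field_simp
    rw [h3] at h2
    linarith
  have hanti : AntitoneOn G (Ioc (0:ℝ) (1/2)) := by
    apply antitoneOn_of_deriv_nonpos (convex_Ioc 0 (1/2))
    · intro y hy
      have hy0 : (0:ℝ) < y := hy.1
      have hy1 : (0:ℝ) < 1 - y := by linarith [hy.2]
      have hh : 0 < binEnt y := hbpos y hy
      apply ContinuousAt.continuousWithinAt
      exact (((Real.continuousAt_log hy0.ne').add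
        ((Real.continuousAt_log hy1.ne').comp
          ((continuous_const.sub continuous_id).continuousAt))).const_mul c).sub
        ((Real.continuousAt_log hh.ne').comp hcont.continuousAt)
    · intro y hy
      rw [interior_Ioc] at hy
      exact ((hder y hy).differentiableAt).differentiableWithinAt
    · intro y hy
      rw [interior_Ioc] at hy
      rw [(hder y hy).deriv]
      exact hG'le y hy
  have hGge : G (1/2) ≤ G x := hanti hx ⟨by norm_num, le_rfl⟩ hx.2
  have hGhalf : G (1/2) = -1 - Real.log (Real.log 2) := by
    have hbe : binEnt (1/2) = Real.log 2 := by
      rw [binEnt_eq, show (1/2:ℝ) = 2⁻¹ by norm_num, Real.binEntropy_two_inv]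
    rw [hG]
    simp only [hbe]
    rw [show (1:ℝ) - 1/2 = 1/2 by norm_num, show Real.log (1/2) = -Real.log 2 by
      rw [one_div, Real.log_inv]]
    rw [hc]
    field_simp
    ring
  have hh : 0 < binEnt x := hbpos x hx
  have hx1 : (0:ℝ) < 1 - x := by linarith [hx.2]
  -- from G x ≥ -1 - log(log 2):
  have hlog : Real.log (binEnt x) ≤ c * (Real.log x + Real.log (1-x)) + 1 + Real.log (Real.log 2) := by
    rw [hGhalf] at hGge
    rw [hG] at hGge
    simp only at hGge
    linarith
  have hxx : (0:ℝ) < x*(1-x) := mul_pos hx.1 hx1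
  have hfin : binEnt x ≤ Real.exp (c * Real.log (x*(1-x)) + 1 + Real.log (Real.log 2)) := by
    calc binEnt x = Real.exp (Real.log (binEnt x)) := (Real.exp_log hh).symm
    _ ≤ _ := by
        apply Real.exp_le_exp.2
        rw [Real.log_mul (ne_of_gt hx.1) (ne_of_gt hx1)]
        exact hlog
  have hexp : Real.exp (c * Real.log (x*(1-x)) + 1 + Real.log (Real.log 2))
      = Real.exp 1 * Real.log 2 * (x*(1-x)) ^ c := by
    rw [Real.exp_add, Real.exp_add, Real.exp_log log2_pos,
      Real.rpow_def_of_pos hxx]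
    ring
  rw [hexp] at hfin
  rw [show 1 / Real.log 4 = c by rw [log_four, hc, one_div]]
  exact hfin

theorem binEnt_sandwich (x : ℝ) (hx : x ∈ Set.Icc (0:ℝ) 1) :
    (4 * Real.log 2) * (x * (1 - x)) ≤ binEnt x ∧
    binEnt x ≤ (Real.exp 1 * Real.log 2) * (x * (1 - x)) ^ (1 / Real.log 4) := by
  have hlog4 : (0:ℝ) < Real.log 4 := by rw [log_four]; linarith [log2_pos]
  rcases eq_or_lt_of_le hx.1 with rfl | hx0
  · constructor
    · norm_num [binEnt]
    · rw [show (0:ℝ) * (1 - 0) = 0 by ring, Real.zero_rpow (one_div_ne_zero (ne_of_gt hlog4))]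
      norm_num [binEnt]
  rcases eq_or_lt_of_le hx.2 with rfl | hx1
  · constructor
    · norm_num [binEnt]
    · rw [show (1:ℝ) * (1 - 1) = 0 by ring, Real.zero_rpow (one_div_ne_zero (ne_of_gt hlog4))]
      norm_num [binEnt]
  have hxI : x ∈ Ioo (0:ℝ) 1 := ⟨hx0, hx1⟩
  refine ⟨lower_bound hxI, ?_⟩
  rcases le_or_gt x (1/2) with h | h
  · exact upper_half ⟨hx0, h⟩
  · have := upper_half (x := 1-x) ⟨by linarith, by linarith⟩
    rw [binEnt_symm, show (1:ℝ) - (1-x) = x by ring, show ((1:ℝ)-x)*x = x*(1-x) by ring] at this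
    exact this
end

section
/- Let X and Y be independent random variables each distributed as ∑_{n=1}^∞ X_n/α^n with X_n i.i.d. uniform on {0, α−1} (the uniform measure on the ratio-α Cantor set, α > 2), and let F be the CDF of R = X − Y. Then for all r in [0,1], F(r) = (1/2) F(α r) + (1/4) F(α r − (α−1)) + (1/4) F(α r + (α−1)). -/
open MeasureTheory ProbabilityTheory

private lemma aux_summable {α c : ℝ} (hα : 1 < α) (hc : 0 ≤ c) (u : ℕ → ℝ)
    (hu : ∀ n, u n = 0 ∨ u n = c) :
    Summable (fun n => u n / α ^ (n + 1)) := by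
  have hα0 : 0 < α := lt_trans one_pos hα
  have h1 : Summable (fun n : ℕ => c / α ^ (n + 1)) := by
    have hs : Summable (fun n : ℕ => (α⁻¹) ^ n) :=
      summable_geometric_of_lt_one (by positivity) (inv_lt_one_of_one_lt₀ hα)
    refine (hs.mul_left (c / α)).congr fun n => ?_
    rw [inv_pow, ← div_eq_mul_inv, pow_succ', ← div_div]
  refine Summable.of_nonneg_of_le (fun n => ?_) (fun n => ?_) h1
  · rcases hu n with h | h <;> rw [h] <;> positivity
  · have hle : u n ≤ c := by rcases hu n with h | h <;> simp [h, hc]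
    have hp : (0:ℝ) < α ^ (n+1) := by positivity
    exact div_le_div_of_nonneg_right hle hp.le

private lemma aux_meas_tsum {Ω : Type*} {m : MeasurableSpace Ω} {α c : ℝ} (hα : 1 < α)
    (hc : 0 ≤ c) (f : ℕ → Ω → ℝ) (hval : ∀ n ω, f n ω = 0 ∨ f n ω = c)
    (hf : ∀ n, Measurable[m] (f n)) :
    Measurable[m] (fun ω => ∑' n, f n ω / α ^ (n + 1)) := by
  apply measurable_of_tendsto_metrizable
    (f := fun k ω => ∑ n ∈ Finset.range k, f n ω / α ^ (n + 1))
  · intro k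
    exact Finset.measurable_sum _ fun n _ => (hf n).div_const _
  · rw [tendsto_pi_nhds]
    intro ω
    exact (aux_summable hα hc _ (fun n => hval n ω)).hasSum.tendsto_sum_nat

private lemma aux_findim {Ω : Type*} [MeasurableSpace Ω] (μ : Measure Ω)
    (W : ℕ → Ω → ℝ) (hmeas : ∀ n, Measurable (W n))
    (hindep : iIndepFun (m := fun _ : ℕ => (inferInstance : MeasurableSpace ℝ)) W μ)
    (clip : ℝ → ℝ) (hclip : Measurable clip)
    (β : Measure ℝ) [SigmaFinite β] (hβ : ∀ n, μ.map (fun ω => clip (W n ω)) = β)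
    (I : Finset ℕ) (e : ℕ → ℕ) (he : Function.Injective e) :
    μ.map (fun ω (i : I) => clip (W (e i) ω)) = Measure.pi (fun _ : I => β) := by
  classical
  refine (Measure.pi_eq fun s hs => ?_).symm
  have hFmeas : Measurable (fun ω (i : I) => clip (W (e i) ω)) :=
    measurable_pi_lambda _ fun i => hclip.comp (hmeas _)
  rw [Measure.map_apply hFmeas (MeasurableSet.univ_pi hs)]
  set sets : ℕ → Set ℝ := fun n => ⋂ (i : I), ⋂ (_ : e i = n), clip ⁻¹' s i with hsets
  have hsets_e : ∀ i : I, sets (e i) = clip ⁻¹' s i := by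
    intro i
    apply Set.Subset.antisymm
    · intro x hx
      simp only [hsets, Set.mem_iInter] at hx
      exact hx i rfl
    · intro x hx
      simp only [hsets, Set.mem_iInter]
      intro j hj
      have hji : j = i := Subtype.ext (he hj)
      rw [hji]; exact hx
  have hpre : (fun ω (i : I) => clip (W (e i) ω)) ⁻¹' (Set.pi Set.univ s)
      = ⋂ n ∈ I.image e, W n ⁻¹' sets n := by
    ext ω
    simp only [Set.mem_preimage, Set.mem_pi, Set.mem_univ, forall_true_left,
      Set.mem_iInter, Finset.mem_image]
    constructor
    · rintro h n ⟨i, hi, rfl⟩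
      rw [show sets (e i) = clip ⁻¹' s ⟨i, hi⟩ from hsets_e ⟨i, hi⟩]
      exact h ⟨i, hi⟩
    · intro h i
      have := h (e i) ⟨i, i.2, rfl⟩
      rw [hsets_e i] at this
      exact this
  have hsets_meas : ∀ n, n ∈ I.image e → MeasurableSet (sets n) := by
    intro n _
    exact MeasurableSet.iInter fun i => MeasurableSet.iInter fun _ => hclip (hs i)
  rw [hpre, hindep.measure_inter_preimage_eq_mul (I.image e) hsets_meas]
  have key : ∀ i : I, μ (W (e i) ⁻¹' sets (e i)) = β (s i) := by
    intro i
    rw [hsets_e i]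
    have h1 : W (e i) ⁻¹' (clip ⁻¹' s i) = (fun ω => clip (W ((e (i:ℕ))) ω)) ⁻¹' s i := rfl
    have h2 : Measurable (fun ω => clip (W (e (i:ℕ)) ω)) := hclip.comp (hmeas _)
    rw [h1, ← Measure.map_apply h2 (hs i), hβ]
  calc ∏ n ∈ I.image e, μ (W n ⁻¹' sets n)
      = ∏ i ∈ I, μ (W (e i) ⁻¹' sets (e i)) :=
        Finset.prod_image (fun x _ y _ h => he h)
    _ = ∏ i ∈ I.attach, μ (W (e ↑i) ⁻¹' sets (e ↑i)) :=
        (Finset.prod_attach I fun n => μ (W (e n) ⁻¹' sets (e n))).symm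
    _ = ∏ i : I, β (s i) := Finset.prod_congr rfl fun i _ => key i

private lemma aux_process {Ω : Type*} [MeasurableSpace Ω] (μ : Measure Ω)
    [IsProbabilityMeasure μ]
    (W : ℕ → Ω → ℝ) (hmeas : ∀ n, Measurable (W n))
    (hindep : iIndepFun (m := fun _ : ℕ => (inferInstance : MeasurableSpace ℝ)) W μ)
    (clip : ℝ → ℝ) (hclip : Measurable clip)
    (β : Measure ℝ) [SigmaFinite β] (hβ : ∀ n, μ.map (fun ω => clip (W n ω)) = β) :
    μ.map (fun ω (n : ℕ) => clip (W n ω)) = μ.map (fun ω (n : ℕ) => clip (W (n + 2) ω)) := by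
  have hV : Measurable (fun ω (n : ℕ) => clip (W n ω)) :=
    measurable_pi_lambda _ fun n => hclip.comp (hmeas n)
  have hV' : Measurable (fun ω (n : ℕ) => clip (W (n + 2) ω)) :=
    measurable_pi_lambda _ fun n => hclip.comp (hmeas (n + 2))
  haveI := Measure.isProbabilityMeasure_map hV.aemeasurable (μ := μ)
  haveI := Measure.isProbabilityMeasure_map hV'.aemeasurable (μ := μ)
  refine ext_of_generate_finite _ generateFrom_measurableCylinders.symm
    isPiSystem_measurableCylinders (fun t ht => ?_) (by simp)
  obtain ⟨I, S, hS, rfl⟩ := (mem_measurableCylinders t).mp ht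
  rw [Measure.map_apply hV hS.cylinder, Measure.map_apply hV' hS.cylinder]
  have h1 : (fun ω (n : ℕ) => clip (W n ω)) ⁻¹' cylinder I S
      = (fun ω (i : I) => clip (W (id (i : ℕ)) ω)) ⁻¹' S := rfl
  have h2 : (fun ω (n : ℕ) => clip (W (n + 2) ω)) ⁻¹' cylinder I S
      = (fun ω (i : I) => clip (W ((i : ℕ) + 2) ω)) ⁻¹' S := rfl
  have hm1 : Measurable (fun ω (i : I) => clip (W (id (i : ℕ)) ω)) :=
    measurable_pi_lambda _ fun i => hclip.comp (hmeas _)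
  have hm2 : Measurable (fun ω (i : I) => clip (W ((i : ℕ) + 2) ω)) :=
    measurable_pi_lambda _ fun i => hclip.comp (hmeas _)
  rw [h1, h2, ← Measure.map_apply hm1 hS, ← Measure.map_apply hm2 hS,
    aux_findim μ W hmeas hindep clip hclip β hβ I id (fun a b h => h),
    aux_findim μ W hmeas hindep clip hclip β hβ I (· + 2) (add_left_injective 2)]

theorem cantor_cdf_self_similarity
    {Ω : Type*} [MeasurableSpace Ω] (μ : Measure Ω) [IsProbabilityMeasure μ]
    (α : ℝ) (hα : 2 < α)
    (W : ℕ → Ω → ℝ) (hmeas : ∀ n, Measurable (W n))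
    (hindep : iIndepFun (m := fun _ : ℕ => (inferInstance : MeasurableSpace ℝ)) W μ)
    (hlaw : ∀ n, μ.map (W n) =
      (1/2 : ENNReal) • Measure.dirac (0:ℝ) + (1/2 : ENNReal) • Measure.dirac (α - 1))
    (X Y : Ω → ℝ)
    (hX : ∀ ω, X ω = ∑' n : ℕ, W (2 * n) ω / α ^ (n + 1))
    (hY : ∀ ω, Y ω = ∑' n : ℕ, W (2 * n + 1) ω / α ^ (n + 1))
    (F : ℝ → ℝ)
    (hF : ∀ r, F r = ((μ.map (fun ω => X ω - Y ω)) (Set.Iic r)).toReal) :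
    ∀ r ∈ Set.Icc (0:ℝ) 1,
      F r = (1/2) * F (α * r) + (1/4) * F (α * r - (α - 1)) + (1/4) * F (α * r + (α - 1)) := by
  classical
  intro r _
  have hα1 : (1:ℝ) < α := by linarith
  have hα0 : (0:ℝ) < α := by linarith
  set c : ℝ := α - 1 with hc
  have hc1 : (1:ℝ) < c := by rw [hc]; linarith
  have hc0 : c ≠ 0 := by intro h; rw [h] at hc1; linarith
  have hcpos : (0:ℝ) ≤ c := by linarith
  set clip : ℝ → ℝ := fun x => if x = c then c else 0 with hclipdef
  have hclip : Measurable clip := by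
    apply Measurable.ite _ measurable_const measurable_const
    exact measurableSet_eq
  have hclip0 : clip 0 = 0 := by
    simp only [hclipdef]
    rw [if_neg (fun h => hc0 h.symm)]
  have hclipc : clip c = c := by simp [hclipdef]
  have hclipval : ∀ x, clip x = 0 ∨ clip x = c := by
    intro x
    by_cases h : x = c <;> simp [hclipdef, h]
  set B : ℕ → Ω → ℝ := fun n ω => clip (W n ω) with hBdef
  have hBmeas : ∀ n, Measurable (B n) := fun n => hclip.comp (hmeas n)
  have hBval : ∀ n ω, B n ω = 0 ∨ B n ω = c := fun n ω => hclipval _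
  set βc : Measure ℝ :=
    (1/2 : ENNReal) • Measure.dirac (0:ℝ) + (1/2 : ENNReal) • Measure.dirac c with hβdef
  have hβprob : IsProbabilityMeasure βc := by
    constructor
    simp only [hβdef, Measure.add_apply, Measure.smul_apply, smul_eq_mul,
      MeasureTheory.measure_univ, mul_one]
    rw [ENNReal.div_add_div_same, one_add_one_eq_two]
    exact ENNReal.div_self two_ne_zero ENNReal.ofNat_ne_top
  haveI := hβprob
  have hBlaw : ∀ n, μ.map (B n) = βc := by
    intro n
    have h1 : μ.map (B n) = (μ.map (W n)).map clip := (Measure.map_map hclip (hmeas n)).symm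
    rw [h1, hlaw n, Measure.map_add _ _ hclip, Measure.map_smul, Measure.map_smul,
      Measure.map_dirac' hclip, Measure.map_dirac' hclip, hclip0, hclipc]
  -- singleton masses
  have hsingle_c : ∀ n, μ (B n ⁻¹' {c}) = 1/2 := by
    intro n
    rw [← Measure.map_apply (hBmeas n) (measurableSet_singleton c), hBlaw n, hβdef]
    simp only [Measure.add_apply, Measure.smul_apply, smul_eq_mul, Measure.dirac_apply]
    simp [Set.indicator, Ne.symm hc0]
  have hsingle_0 : ∀ n, μ (B n ⁻¹' {0}) = 1/2 := by
    intro n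
    rw [← Measure.map_apply (hBmeas n) (measurableSet_singleton 0), hBlaw n, hβdef]
    simp only [Measure.add_apply, Measure.smul_apply, smul_eq_mul, Measure.dirac_apply]
    simp [Set.indicator, hc0]
  -- a.e. equality of W and B
  have hae : ∀ᵐ ω ∂μ, ∀ n, W n ω = B n ω := by
    rw [MeasureTheory.ae_all_iff]
    intro n
    rw [MeasureTheory.ae_iff]
    have hsub : {ω | ¬ W n ω = B n ω} ⊆ W n ⁻¹' ({0, c} : Set ℝ)ᶜ := by
      intro ω hω
      simp only [Set.mem_preimage, Set.mem_compl_iff, Set.mem_insert_iff,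
        Set.mem_singleton_iff]
      rintro (h0 | h0) <;> apply hω
      · simp [hBdef, h0, hclip0]
      · simp [hBdef, h0, hclipc]
    refine measure_mono_null hsub ?_
    have hms : MeasurableSet (({0, c} : Set ℝ)ᶜ) :=
      ((measurableSet_singleton c).insert 0).compl
    rw [← Measure.map_apply (hmeas n) hms, hlaw n, hβdef]
    simp only [Measure.add_apply, Measure.smul_apply, smul_eq_mul, Measure.dirac_apply]
    simp [Set.indicator]
  -- summability
  have hsumB : ∀ (k : ℕ → ℕ) (ω : Ω), Summable (fun n => B (k n) ω / α ^ (n + 1)) :=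
    fun k ω => aux_summable hα1 hcpos _ (fun n => hBval (k n) ω)
  -- processes
  set TX : Ω → ℝ := fun ω => ∑' n, B (2 * n) ω / α ^ (n + 1) with hTXdef
  set TY : Ω → ℝ := fun ω => ∑' n, B (2 * n + 1) ω / α ^ (n + 1) with hTYdef
  set TX' : Ω → ℝ := fun ω => ∑' n, B (2 * n + 2) ω / α ^ (n + 1) with hTX'def
  set TY' : Ω → ℝ := fun ω => ∑' n, B (2 * n + 3) ω / α ^ (n + 1) with hTY'def
  set Z : Ω → ℝ := fun ω => TX' ω - TY' ω with hZdef
  have hTXm : Measurable TX :=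
    aux_meas_tsum hα1 hcpos _ (fun n ω => hBval (2 * n) ω) (fun n => hBmeas _)
  have hTYm : Measurable TY :=
    aux_meas_tsum hα1 hcpos _ (fun n ω => hBval (2 * n + 1) ω) (fun n => hBmeas _)
  have hTX'm : Measurable TX' :=
    aux_meas_tsum hα1 hcpos _ (fun n ω => hBval (2 * n + 2) ω) (fun n => hBmeas _)
  have hTY'm : Measurable TY' :=
    aux_meas_tsum hα1 hcpos _ (fun n ω => hBval (2 * n + 3) ω) (fun n => hBmeas _)
  have hZm : Measurable Z := hTX'm.sub hTY'm
  -- a.e. equality X - Y = TX - TY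
  have hXY_ae : (fun ω => X ω - Y ω) =ᵐ[μ] (fun ω => TX ω - TY ω) := by
    filter_upwards [hae] with ω hω
    rw [hX ω, hY ω]
    have h1 : ∑' n : ℕ, W (2 * n) ω / α ^ (n + 1) = TX ω :=
      tsum_congr fun n => by rw [hω (2 * n)]
    have h2 : ∑' n : ℕ, W (2 * n + 1) ω / α ^ (n + 1) = TY ω :=
      tsum_congr fun n => by rw [hω (2 * n + 1)]
    rw [h1, h2]
  -- decomposition identity
  have hkey : ∀ ω, TX ω - TY ω = (B 0 ω - B 1 ω + Z ω) / α := by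
    intro ω
    have e1 : TX ω = B 0 ω / α + TX' ω / α := by
      rw [hTXdef]
      simp only
      rw [Summable.tsum_eq_zero_add (hsumB (fun n => 2 * n) ω)]
      congr 1
      · norm_num
      · rw [hTX'def]
        simp only
        rw [← tsum_div_const]
        apply tsum_congr
        intro n
        have hidx : 2 * (n + 1) = 2 * n + 2 := by ring
        rw [hidx, pow_succ, ← div_div]
    have e2 : TY ω = B 1 ω / α + TY' ω / α := by
      rw [hTYdef]
      simp only
      rw [Summable.tsum_eq_zero_add (hsumB (fun n => 2 * n + 1) ω)]
      congr 1
      · norm_num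
      · rw [hTY'def]
        simp only
        rw [← tsum_div_const]
        apply tsum_congr
        intro n
        have hidx : 2 * (n + 1) + 1 = 2 * n + 3 := by ring
        rw [hidx, pow_succ, ← div_div]
    rw [e1, e2, hZdef]
    field_simp
    ring
  -- process law equality
  have hproc : μ.map (fun ω => TX ω - TY ω) = μ.map Z := by
    set g : (ℕ → ℝ) → ℝ := fun w =>
      (∑' n, clip (w (2 * n)) / α ^ (n + 1)) - (∑' n, clip (w (2 * n + 1)) / α ^ (n + 1))
      with hgdef
    have hgmeas : Measurable g := by
      apply Measurable.sub
      · exact aux_meas_tsum hα1 hcpos _ (fun n w => hclipval _)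
          (fun n => hclip.comp (measurable_pi_apply _))
      · exact aux_meas_tsum hα1 hcpos _ (fun n w => hclipval _)
          (fun n => hclip.comp (measurable_pi_apply _))
    have hclipB : ∀ k ω, clip (B k ω) = B k ω := by
      intro k ω
      rcases hBval k ω with h | h <;> rw [h]
      · exact hclip0
      · exact hclipc
    have hVm : Measurable (fun ω (n : ℕ) => clip (W n ω)) :=
      measurable_pi_lambda _ fun n => hclip.comp (hmeas n)
    have hV'm : Measurable (fun ω (n : ℕ) => clip (W (n + 2) ω)) :=
      measurable_pi_lambda _ fun n => hclip.comp (hmeas _)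
    have hVeq : (fun ω => TX ω - TY ω) = g ∘ (fun ω (n : ℕ) => clip (W n ω)) := by
      funext ω
      simp only [Function.comp_apply, hgdef, hTXdef, hTYdef]
      congr 1 <;> exact tsum_congr fun n => by rw [show clip (W _ ω) = B _ ω from rfl, hclipB]
    have hV'eq : Z = g ∘ (fun ω (n : ℕ) => clip (W (n + 2) ω)) := by
      funext ω
      simp only [Function.comp_apply, hgdef, hZdef, hTX'def, hTY'def]
      congr 1
      · exact tsum_congr fun n => by
          rw [show clip (W (2 * n + 2) ω) = B (2 * n + 2) ω from rfl, hclipB]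
      · exact tsum_congr fun n => by
          rw [show (2 : ℕ) * n + 1 + 2 = 2 * n + 3 from by ring,
            show clip (W (2 * n + 3) ω) = B (2 * n + 3) ω from rfl, hclipB]
    rw [hVeq, hV'eq, ← Measure.map_map hgmeas hVm, ← Measure.map_map hgmeas hV'm,
      aux_process μ W hmeas hindep clip hclip βc hBlaw]
  -- independence
  set m' : ℕ → MeasurableSpace Ω := fun n => MeasurableSpace.comap (W n) inferInstance
    with hm'def
  have hm'le : ∀ n, m' n ≤ ‹MeasurableSpace Ω› := fun n => (hmeas n).comap_le
  have hiI : iIndep m' μ := (iIndepFun_iff_iIndep _ _ _).mp hindep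
  have hdisj : Disjoint ({0, 1} : Set ℕ) {n | 2 ≤ n} := by
    rw [Set.disjoint_left]
    rintro n (rfl | rfl) h <;> simp at h
  have hInd : Indep (⨆ n ∈ ({0, 1} : Set ℕ), m' n) (⨆ n ∈ {n : ℕ | 2 ≤ n}, m' n) μ :=
    indep_iSup_of_disjoint hm'le hiI hdisj
  have hWm' : ∀ n, Measurable[m' n] (W n) := fun n => measurable_iff_comap_le.mpr le_rfl
  set P : Ω → ℝ × ℝ := fun ω => (B 0 ω, B 1 ω) with hPdef
  have hPm : Measurable P := (hBmeas 0).prodMk (hBmeas 1)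
  have hBm1 : Measurable[⨆ n ∈ ({0, 1} : Set ℕ), m' n] P := by
    apply Measurable.prodMk
    · exact (hclip.comp (hWm' 0)).mono (le_biSup m' (by simp)) le_rfl
    · exact (hclip.comp (hWm' 1)).mono (le_biSup m' (by simp)) le_rfl
  have hZm2 : Measurable[⨆ n ∈ {n : ℕ | 2 ≤ n}, m' n] Z := by
    have hWk : ∀ k : ℕ, 2 ≤ k → Measurable[⨆ n ∈ {n : ℕ | 2 ≤ n}, m' n] (B k) := by
      intro k hk
      exact (hclip.comp (hWm' k)).mono (le_biSup m' (by simpa using hk)) le_rfl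
    have h1 : Measurable[⨆ n ∈ {n : ℕ | 2 ≤ n}, m' n] TX' :=
      aux_meas_tsum hα1 hcpos _ (fun n ω => hBval (2 * n + 2) ω)
        (fun n => hWk (2 * n + 2) (by omega))
    have h2 : Measurable[⨆ n ∈ {n : ℕ | 2 ≤ n}, m' n] TY' :=
      aux_meas_tsum hα1 hcpos _ (fun n ω => hBval (2 * n + 3) ω)
        (fun n => hWk (2 * n + 3) (by omega))
    exact h1.sub h2
  have hprod : ∀ (p : ℝ × ℝ) (t : ℝ),
      μ (P ⁻¹' {p} ∩ Z ⁻¹' Set.Iic t) = μ (P ⁻¹' {p}) * μ (Z ⁻¹' Set.Iic t) :=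
    fun p t => ((Indep_iff _ _ μ).mp hInd _ _
      (hBm1 (measurableSet_singleton p)) (hZm2 measurableSet_Iic))
  -- quarter masses
  have hBindep : IndepFun (B 0) (B 1) μ := by
    have := hindep.indepFun (show (0:ℕ) ≠ 1 by norm_num)
    exact this.comp hclip hclip
  have hquarter : ∀ a b : ℝ, μ (B 0 ⁻¹' {a}) = 1/2 → μ (B 1 ⁻¹' {b}) = 1/2 →
      μ (P ⁻¹' {(a, b)}) = 1/4 := by
    intro a b ha hb
    have hset : P ⁻¹' {(a, b)} = B 0 ⁻¹' {a} ∩ B 1 ⁻¹' {b} := by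
      ext ω
      simp [hPdef, Prod.ext_iff]
    rw [hset, hBindep.measure_inter_preimage_eq_mul _ _
      (measurableSet_singleton a) (measurableSet_singleton b), ha, hb]
    rw [show (1/2 : ENNReal) * (1/2) = 1/4 by
      simp only [one_div]
      rw [← ENNReal.mul_inv (by norm_num) (by norm_num)]
      norm_num]
  -- main functional equation for ζ
  set ζ : Measure ℝ := μ.map Z with hζdef
  haveI hζprob : IsProbabilityMeasure ζ := Measure.isProbabilityMeasure_map hZm.aemeasurable
  have hζapp : ∀ t : ℝ, ζ (Set.Iic t) = μ (Z ⁻¹' Set.Iic t) := fun t =>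
    Measure.map_apply hZm measurableSet_Iic
  have hmain : ∀ t : ℝ, ζ (Set.Iic t) =
      (1/4) * ζ (Set.Iic (α * t)) + (1/4) * ζ (Set.Iic (α * t - c))
      + ((1/4) * ζ (Set.Iic (α * t + c)) + (1/4) * ζ (Set.Iic (α * t))) := by
    intro t
    have hζT : ζ (Set.Iic t) = μ ((fun ω => TX ω - TY ω) ⁻¹' Set.Iic t) := by
      rw [← hproc, Measure.map_apply (f := fun ω => TX ω - TY ω) (hTXm.sub hTYm) measurableSet_Iic]
    rw [hζT]
    have hsetEq : (fun ω => TX ω - TY ω) ⁻¹' Set.Iic t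
        = ((P ⁻¹' {((0:ℝ), (0:ℝ))} ∩ Z ⁻¹' Set.Iic (α * t))
            ∪ (P ⁻¹' {(c, (0:ℝ))} ∩ Z ⁻¹' Set.Iic (α * t - c)))
          ∪ ((P ⁻¹' {((0:ℝ), c)} ∩ Z ⁻¹' Set.Iic (α * t + c))
            ∪ (P ⁻¹' {(c, c)} ∩ Z ⁻¹' Set.Iic (α * t))) := by
      ext ω
      simp only [Set.mem_preimage, Set.mem_Iic, Set.mem_union, Set.mem_inter_iff,
        Set.mem_singleton_iff, Prod.mk.injEq, hPdef]
      rw [hkey ω, div_le_iff₀ hα0]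
      rcases hBval 0 ω with h0 | h0 <;> rcases hBval 1 ω with h1 | h1 <;>
        simp only [h0, h1, hc0, Ne.symm hc0, true_and, and_true, false_and, and_false,
          eq_self_iff_true, not_true, not_false_iff, or_false, false_or] <;>
        constructor <;> intro h <;> nlinarith [h]
    have hdis : ∀ (p q : ℝ × ℝ) (s u : Set ℝ), p ≠ q →
        Disjoint (P ⁻¹' {p} ∩ Z ⁻¹' s) (P ⁻¹' {q} ∩ Z ⁻¹' u) := by
      intro p q s u hpq
      rw [Set.disjoint_left]
      rintro ω ⟨h1, -⟩ ⟨h2, -⟩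
      simp only [Set.mem_preimage, Set.mem_singleton_iff] at h1 h2
      exact hpq (h1 ▸ h2 ▸ rfl)
    have hpair : ∀ (a b a' b' : ℝ), (a ≠ a' ∨ b ≠ b') → ((a, b) : ℝ × ℝ) ≠ (a', b') := by
      rintro a b a' b' (h | h) heq
      · exact h (congrArg Prod.fst heq)
      · exact h (congrArg Prod.snd heq)
    have hne0c : (0:ℝ) ≠ c := Ne.symm hc0
    have hmsA : ∀ (p : ℝ × ℝ) (s : Set ℝ), MeasurableSet s →
        MeasurableSet (P ⁻¹' {p} ∩ Z ⁻¹' s) := fun p s hs =>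
      (hPm (measurableSet_singleton p)).inter (hZm hs)
    rw [hsetEq]
    rw [measure_union (by
        apply Set.disjoint_union_right.mpr
        constructor
        · apply Set.disjoint_union_left.mpr
          exact ⟨hdis _ _ _ _ (hpair _ _ _ _ (Or.inr hne0c)), hdis _ _ _ _ (hpair _ _ _ _ (Or.inl hc0))⟩
        · apply Set.disjoint_union_left.mpr
          exact ⟨hdis _ _ _ _ (hpair _ _ _ _ (Or.inl hne0c)), hdis _ _ _ _ (hpair _ _ _ _ (Or.inr hne0c))⟩)
      (((hmsA _ _ measurableSet_Iic).union (hmsA _ _ measurableSet_Iic))),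
      measure_union (hdis _ _ _ _ (hpair _ _ _ _ (Or.inl hne0c))) (hmsA _ _ measurableSet_Iic),
      measure_union (hdis _ _ _ _ (hpair _ _ _ _ (Or.inl hne0c))) (hmsA _ _ measurableSet_Iic)]
    rw [hprod, hprod, hprod, hprod,
      hquarter 0 0 (hsingle_0 0) (hsingle_0 1), hquarter c 0 (hsingle_c 0) (hsingle_0 1),
      hquarter 0 c (hsingle_0 0) (hsingle_c 1), hquarter c c (hsingle_c 0) (hsingle_c 1),
      ← hζapp (α * t), ← hζapp (α * t - c), ← hζapp (α * t + c)]
  -- final assembly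
  have hν : μ.map (fun ω => X ω - Y ω) = ζ := (Measure.map_congr hXY_ae).trans hproc
  have hFζ : ∀ t, F t = (ζ (Set.Iic t)).toReal := fun t => by rw [hF t, hν]
  have hne : ∀ s : Set ℝ, ζ s ≠ ⊤ := fun s => measure_ne_top ζ s
  have h4ne : (1/4 : ENNReal) ≠ ⊤ := by norm_num
  have hterm : ∀ s : Set ℝ, ((1/4 : ENNReal) * ζ s).toReal = (1/4 : ℝ) * (ζ s).toReal := by
    intro s
    rw [ENNReal.toReal_mul]
    norm_num
  rw [hFζ r, hFζ (α * r), hFζ (α * r - c), hFζ (α * r + c), hmain r]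
  rw [ENNReal.toReal_add, ENNReal.toReal_add, ENNReal.toReal_add]
  · simp only [hterm]
    ring
  all_goals
    first
      | exact ENNReal.mul_ne_top h4ne (hne _)
      | exact ENNReal.add_ne_top.mpr ⟨ENNReal.mul_ne_top h4ne (hne _),
          ENNReal.mul_ne_top h4ne (hne _)⟩
      | exact ENNReal.add_ne_top.mpr ⟨ENNReal.add_ne_top.mpr ⟨ENNReal.mul_ne_top h4ne (hne _),
          ENNReal.mul_ne_top h4ne (hne _)⟩, ENNReal.mul_ne_top h4ne (hne _)⟩
end

section
/- Let η > 0 and d > 0. Then ∫₀^∞ t^{d−1} h₂(exp(−t^η)) dt is finite and equals (1/η) Γ(d/η) ( d/η + ζ(d/η + 1) − ∑_{k=2}^∞ k^{−d/η}/(k−1) ), where Γ is the gamma function and ζ the Riemann zeta function. -/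
open MeasureTheory

lemma integrableOn_aux {p q b : ℝ} (hp : 0 < p) (hq : -1 < q) (hb : 0 < b) :
    IntegrableOn (fun x : ℝ => x ^ q * Real.exp (-b * x ^ p)) (Set.Ioi 0) := by
  have h1 : (-1 : ℝ) < (q + 1) / p - 1 := by
    have : 0 < (q + 1) / p := div_pos (by linarith) hp
    linarith
  have hf : IntegrableOn (fun u : ℝ => u ^ ((q + 1) / p - 1) * Real.exp (-b * u)) (Set.Ioi 0) := by
    have := integrableOn_rpow_mul_exp_neg_mul_rpow (p := 1) h1 one_pos hb
    refine this.congr_fun (fun x hx => ?_) measurableSet_Ioi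
    beta_reduce
    rw [Real.rpow_one]
  have h := (integrableOn_Ioi_comp_rpow_iff'
    (fun u : ℝ => u ^ ((q + 1) / p - 1) * Real.exp (-b * u)) hp.ne').mpr hf
  refine h.congr_fun (fun x hx => ?_) measurableSet_Ioi
  have hx' : (0:ℝ) < x := hx
  have hmul : p * ((q + 1) / p - 1) = q + 1 - p := by field_simp
  beta_reduce
  rw [smul_eq_mul, ← Real.rpow_mul hx'.le, hmul, ← mul_assoc, ← Real.rpow_add hx']
  ring_nf

lemma binEnt_cont : Continuous binEnt := by
  unfold binEnt
  exact (Real.continuous_mul_log.neg).sub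
    (Real.continuous_mul_log.comp (continuous_const.sub continuous_id))

theorem rayleigh_entropy_integral_eval (η d : ℝ) (hη : 0 < η) (hd : 0 < d) :
    IntegrableOn (fun t : ℝ => t ^ (d - 1) * binEnt (Real.exp (-(t ^ η)))) (Set.Ioi 0) ∧
    ∫ t in Set.Ioi (0:ℝ), t ^ (d - 1) * binEnt (Real.exp (-(t ^ η))) =
      (1 / η) * Real.Gamma (d / η) *
        (d / η + (∑' n : ℕ, 1 / ((n : ℝ) + 1) ^ (d / η + 1))
          - ∑' k : ℕ, ((k : ℝ) + 2) ^ (-(d / η)) / ((k : ℝ) + 1)) := by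
  set r : ℝ := d / η with hrdef
  have hr : 0 < r := div_pos hd hη
  set C : ℝ := (1 / η) * Real.Gamma r with hCdef
  set g : ℝ → ℝ := fun t => t ^ (d - 1) * binEnt (Real.exp (-(t ^ η))) with hgdef
  set g₀ : ℝ → ℝ := fun t => t ^ (d + η - 1) * Real.exp (-(t ^ η)) with hg0def
  set f : ℕ → ℝ → ℝ := fun n t =>
    t ^ (d - 1) * ((Real.exp (-(((n:ℝ)+1) * t ^ η)) - Real.exp (-(((n:ℝ)+2) * t ^ η))) / ((n:ℝ)+1))
    with hfdef
  -- basic integrabilities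
  have hq : (-1:ℝ) < d - 1 := by linarith
  have hint1 : ∀ c : ℝ, 0 < c →
      IntegrableOn (fun t : ℝ => t ^ (d - 1) * Real.exp (-(c * t ^ η))) (Set.Ioi 0) := by
    intro c hc
    simpa [neg_mul] using integrableOn_aux hη hq hc
  have hival : ∀ c : ℝ, 0 < c →
      ∫ t in Set.Ioi (0:ℝ), t ^ (d - 1) * Real.exp (-(c * t ^ η)) = c ^ (-r) * C := by
    intro c hc
    have := integral_rpow_mul_exp_neg_mul_rpow hη hq hc
    simp only [neg_mul] at this ⊢
    rw [this, hCdef]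
    rw [show d - 1 + 1 = d by ring]
    rw [show -d / η = -r by rw [hrdef]; ring]
    ring

  -- integrability and value of f n
  have hfint : ∀ n : ℕ, IntegrableOn (f n) (Set.Ioi 0) := by
    intro n
    have h1 := hint1 ((n:ℝ)+1) (by positivity)
    have h2 := hint1 ((n:ℝ)+2) (by positivity)
    have := ((h1.sub h2).div_const ((n:ℝ)+1))
    refine this.congr (Filter.Eventually.of_forall fun t => ?_)
    simp only [hfdef, Pi.sub_apply]
    ring
  have hIval : ∀ n : ℕ, ∫ t in Set.Ioi (0:ℝ), f n t
      = C * ((((n:ℝ)+1) ^ (-r) - ((n:ℝ)+2) ^ (-r)) / ((n:ℝ)+1)) := by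
    intro n
    have h1 := hint1 ((n:ℝ)+1) (by positivity)
    have h2 := hint1 ((n:ℝ)+2) (by positivity)
    have heq : ∀ t : ℝ, f n t = (((n:ℝ)+1)⁻¹) *
        (t ^ (d - 1) * Real.exp (-(((n:ℝ)+1) * t ^ η))
          - t ^ (d - 1) * Real.exp (-(((n:ℝ)+2) * t ^ η))) := by
      intro t; simp only [hfdef]; ring
    simp_rw [heq]
    rw [integral_const_mul, integral_sub h1 h2, hival _ (by positivity : (0:ℝ) < (n:ℝ)+1),
      hival _ (by positivity : (0:ℝ) < (n:ℝ)+2)]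
    ring
  -- summability
  have Sa : Summable (fun n : ℕ => 1 / ((n:ℝ)+1) ^ (r+1)) := by
    have h0 := (Real.summable_one_div_nat_rpow (p := r+1)).mpr (by linarith)
    have h1 := (summable_nat_add_iff 1).mpr h0
    simpa [Nat.cast_add] using h1
  have Sb : Summable (fun n : ℕ => ((n:ℝ)+2) ^ (-r) / ((n:ℝ)+1)) := by
    refine Summable.of_nonneg_of_le (fun n => by positivity) (fun n => ?_) Sa
    have hb1 : (0:ℝ) < (n:ℝ)+1 := by positivity
    have hle : ((n:ℝ)+2) ^ (-r) ≤ ((n:ℝ)+1) ^ (-r) := by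
      rw [Real.rpow_neg (by positivity), Real.rpow_neg (by positivity)]
      exact inv_anti₀ (Real.rpow_pos_of_pos hb1 r)
        (Real.rpow_le_rpow hb1.le (by linarith) hr.le)
    have : ((n:ℝ)+1) ^ (-r) / ((n:ℝ)+1) = 1 / ((n:ℝ)+1) ^ (r+1) := by
      rw [Real.rpow_add hb1, Real.rpow_one, Real.rpow_neg (by positivity)]
      field_simp
    calc ((n:ℝ)+2) ^ (-r) / ((n:ℝ)+1) ≤ ((n:ℝ)+1) ^ (-r) / ((n:ℝ)+1) :=
          by gcongr
      _ = 1 / ((n:ℝ)+1) ^ (r+1) := this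
  -- pointwise series expansion
  have hhs : ∀ t ∈ Set.Ioi (0:ℝ), HasSum (fun n => f n t) (g t - g₀ t) := by
    intro t ht
    have ht' : (0:ℝ) < t := ht
    have hs : 0 < t ^ η := Real.rpow_pos_of_pos ht' η
    set p := Real.exp (-(t ^ η)) with hpdef
    have hp0 : 0 < p := Real.exp_pos _
    have hp1 : p < 1 := by
      rw [hpdef]
      simpa using Real.exp_lt_exp.mpr (show -(t^η) < 0 by linarith)
    have hlog := Real.hasSum_pow_div_log_of_abs_lt_one
      (x := p) (by rw [abs_of_pos hp0]; exact hp1)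
    have h2 := hlog.mul_left (t ^ (d-1) * (1 - p))
    have hpow : ∀ m : ℕ, p ^ m = Real.exp (-((m:ℝ) * t^η)) := by
      intro m
      rw [hpdef, ← Real.exp_nat_mul]
      ring_nf
    have key : ∀ n : ℕ, (t^(d-1)*(1-p)) * (p^(n+1)/((n:ℕ)+1:ℝ)) = f n t := by
      intro n
      have e1 : p ^ (n+1) = Real.exp (-(((n:ℝ)+1) * t^η)) := by
        rw [hpow (n+1)]; push_cast; ring_nf
      have e2 : p ^ (n+2) = Real.exp (-(((n:ℝ)+2) * t^η)) := by
        rw [hpow (n+2)]; push_cast; ring_nf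
      simp only [hfdef]
      rw [← e1, ← e2]
      push_cast
      ring
    rw [show (fun n : ℕ => t^(d-1)*(1-p) * (p^(n+1)/((n:ℕ)+1:ℝ))) = fun n => f n t
      from funext key] at h2
    convert h2 using 1
    · rfl
    have hts : t ^ (d + η - 1) = t ^ (d-1) * t ^ η := by
      rw [← Real.rpow_add ht']; ring_nf
    simp only [hgdef, hg0def, binEnt, hpdef, Real.log_exp]
    rw [hts]
    ring
  have htsum : ∀ t ∈ Set.Ioi (0:ℝ), ∑' n, f n t = g t - g₀ t := fun t ht => (hhs t ht).tsum_eq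
  -- integrability of majorants
  have hg0int : IntegrableOn g₀ (Set.Ioi 0) := by
    simpa [neg_mul, one_mul, hg0def] using
      integrableOn_aux hη (show (-1:ℝ) < d + η - 1 by linarith) one_pos
  have hg1int : IntegrableOn (fun t : ℝ => t ^ (d-1) * Real.exp (-(t^η))) (Set.Ioi 0) := by
    simpa using hint1 1 one_pos
  -- measurability of g
  have hgmeas : AEStronglyMeasurable g (volume.restrict (Set.Ioi 0)) := by
    refine ContinuousOn.aestronglyMeasurable (ContinuousOn.mul ?_ ?_) measurableSet_Ioi
    · exact continuousOn_id.rpow_const (fun x hx => Or.inl (ne_of_gt hx))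
    · exact (binEnt_cont.comp Real.continuous_exp).comp_continuousOn
        ((continuousOn_id.rpow_const (fun x hx => Or.inl (ne_of_gt hx))).neg)
  -- pointwise bound
  have hbound : ∀ t ∈ Set.Ioi (0:ℝ), ‖g t‖ ≤ g₀ t + t^(d-1) * Real.exp (-(t^η)) := by
    intro t ht
    have ht' : (0:ℝ) < t := ht
    have hs : 0 < t ^ η := Real.rpow_pos_of_pos ht' η
    set p := Real.exp (-(t ^ η)) with hpdef
    have hp0 : 0 < p := Real.exp_pos _
    have hp1 : p < 1 := by
      rw [hpdef]
      simpa using Real.exp_lt_exp.mpr (show -(t^η) < 0 by linarith)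
    have hlogp : Real.log p = -(t^η) := by rw [hpdef, Real.log_exp]
    have hBnonneg : 0 ≤ binEnt p := by
      unfold binEnt
      have h1 : p * Real.log p ≤ 0 :=
        mul_nonpos_of_nonneg_of_nonpos hp0.le (Real.log_nonpos hp0.le hp1.le)
      have h2 : (1-p) * Real.log (1-p) ≤ 0 :=
        mul_nonpos_of_nonneg_of_nonpos (by linarith) (Real.log_nonpos (by linarith) (by linarith))
      linarith
    have hBle : binEnt p ≤ t^η * p + p := by
      unfold binEnt
      have hlt : 0 < 1 - p := by linarith
      have hinv := Real.log_le_sub_one_of_pos (inv_pos.mpr hlt)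
      rw [Real.log_inv] at hinv
      have h1 : -((1-p) * Real.log (1-p)) ≤ p := by
        have h3 : -((1-p) * Real.log (1-p)) = (1-p) * (-Real.log (1-p)) := by ring
        rw [h3]
        calc (1-p) * (-Real.log (1-p)) ≤ (1-p) * ((1-p)⁻¹ - 1) :=
              mul_le_mul_of_nonneg_left hinv hlt.le
          _ = p := by field_simp; ring
      rw [hlogp]
      nlinarith [h1]
    have hg0' : 0 ≤ t ^ (d-1) := (Real.rpow_pos_of_pos ht' _).le
    have hts : t ^ (d + η - 1) = t ^ (d-1) * t ^ η := by
      rw [← Real.rpow_add ht']; ring_nf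
    have : g t = t^(d-1) * binEnt p := rfl
    rw [this, Real.norm_eq_abs, abs_of_nonneg (mul_nonneg hg0' hBnonneg)]
    calc t^(d-1) * binEnt p ≤ t^(d-1) * (t^η * p + p) :=
          mul_le_mul_of_nonneg_left hBle hg0'
      _ = g₀ t + t^(d-1) * p := by simp only [hg0def]; rw [hts]; ring
  have hg : IntegrableOn g (Set.Ioi 0) := by
    refine Integrable.mono' (hg0int.add hg1int) hgmeas ?_
    filter_upwards [ae_restrict_mem measurableSet_Ioi] with t ht using hbound t ht
  refine ⟨hg, ?_⟩
  -- nonnegativity of f n on Ioi 0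
  have hfnn : ∀ n : ℕ, ∀ t ∈ Set.Ioi (0:ℝ), 0 ≤ f n t := by
    intro n t ht
    have ht' : (0:ℝ) < t := ht
    have hs : 0 < t ^ η := Real.rpow_pos_of_pos ht' η
    have hle : Real.exp (-(((n:ℝ)+2) * t ^ η)) ≤ Real.exp (-(((n:ℝ)+1) * t ^ η)) := by
      apply Real.exp_le_exp.mpr; nlinarith
    simp only [hfdef]
    apply mul_nonneg (Real.rpow_pos_of_pos ht' _).le
    apply div_nonneg (by linarith) (by positivity)
  have ha_eq : ∀ n : ℕ, ((n:ℝ)+1) ^ (-r) / ((n:ℝ)+1) = 1 / ((n:ℝ)+1) ^ (r+1) := by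
    intro n
    have hb1 : (0:ℝ) < (n:ℝ)+1 := by positivity
    rw [Real.rpow_add hb1, Real.rpow_one, Real.rpow_neg (by positivity)]
    field_simp
  have Sa' : Summable (fun n : ℕ => ((n:ℝ)+1) ^ (-r) / ((n:ℝ)+1)) := by
    simp only [ha_eq]; exact Sa
  have hSI : Summable (fun n : ℕ => ∫ t in Set.Ioi (0:ℝ), f n t) := by
    refine Summable.congr ((Sa'.sub Sb).mul_left C) fun n => ?_
    rw [hIval n, sub_div]
  have hnonnegI : ∀ n, 0 ≤ ∫ t in Set.Ioi (0:ℝ), f n t := fun n =>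
    setIntegral_nonneg measurableSet_Ioi (hfnn n)
  have hlin : ∀ n : ℕ, ∫⁻ t in Set.Ioi (0:ℝ), ‖f n t‖ₑ
      = ENNReal.ofReal (∫ t in Set.Ioi (0:ℝ), f n t) := by
    intro n
    rw [ofReal_integral_eq_lintegral_ofReal (hfint n)
      (by filter_upwards [ae_restrict_mem measurableSet_Ioi] with t ht using hfnn n t ht)]
    refine lintegral_congr_ae ?_
    filter_upwards [ae_restrict_mem measurableSet_Ioi] with t ht
    rw [← Real.enorm_eq_ofReal (hfnn n t ht)]
  have hTsumInt : Integrable (fun t => ∑' n, f n t) (volume.restrict (Set.Ioi 0)) := by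
    refine (hg.sub hg0int).congr ?_
    filter_upwards [ae_restrict_mem measurableSet_Ioi] with t ht
    exact (htsum t ht).symm
  have step1 : ∫ t in Set.Ioi (0:ℝ), g t
      = (∫ t in Set.Ioi (0:ℝ), g₀ t) + ∑' n, ∫ t in Set.Ioi (0:ℝ), f n t := by
    have hcongr : ∫ t in Set.Ioi (0:ℝ), g t
        = ∫ t in Set.Ioi (0:ℝ), (g₀ t + ∑' n, f n t) := by
      refine setIntegral_congr_fun measurableSet_Ioi (fun t ht => ?_)
      rw [htsum t ht]; ring
    rw [hcongr, integral_add hg0int hTsumInt]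
    congr 1
    refine integral_tsum (fun n => (hfint n).1) ?_
    rw [tsum_congr hlin, ← ENNReal.ofReal_tsum_of_nonneg hnonnegI hSI]
    exact ENNReal.ofReal_ne_top
  have hIg0 : ∫ t in Set.Ioi (0:ℝ), g₀ t = C * r := by
    have hv := integral_rpow_mul_exp_neg_rpow hη (show (-1:ℝ) < d + η - 1 by linarith)
    simp only [hg0def]
    rw [hv, show (d + η - 1 + 1)/η = r + 1 by rw [hrdef]; field_simp; ring,
      Real.Gamma_add_one (ne_of_gt hr), hCdef]
    ring
  have hT : ∑' n, ∫ t in Set.Ioi (0:ℝ), f n t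
      = C * ((∑' n : ℕ, 1 / ((n:ℝ)+1) ^ (r+1)) - ∑' n : ℕ, ((n:ℝ)+2) ^ (-r) / ((n:ℝ)+1)) := by
    have : ∀ n : ℕ, ∫ t in Set.Ioi (0:ℝ), f n t
        = C * (1 / ((n:ℝ)+1) ^ (r+1) - ((n:ℝ)+2) ^ (-r) / ((n:ℝ)+1)) := by
      intro n
      rw [hIval n, sub_div, ha_eq n]
    rw [tsum_congr this, tsum_mul_left, Sa.tsum_sub Sb]
  rw [step1, hIg0, hT, hCdef]
  ring
end

section
/- Let η > 0 and let R be a bounded nonnegative random variable with R ≤ D almost surely, D > 0. Then as r₀ → ∞, E[h₂(exp(−(R/r₀)^η))] = (1 + η log r₀)/r₀^η · E[R^η] − (η/r₀^η)·E[R^η log R] + O(r₀^{−2η} log r₀). -/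
open MeasureTheory

lemma measurable_binEnt : Measurable binEnt := by
  unfold binEnt
  fun_prop

lemma rpow_neg_log_le {s a : ℝ} (hs : 0 < s) (ha : 0 < a) :
    s ^ a * (-Real.log s) ≤ 1 / a := by
  have h1 : Real.log (s ^ (-a)) ≤ s ^ (-a) - 1 :=
    Real.log_le_sub_one_of_pos (Real.rpow_pos_of_pos hs _)
  rw [Real.log_rpow hs] at h1
  have h2 : -Real.log s ≤ s ^ (-a) / a := by
    rw [le_div_iff₀ ha]
    have hp : (0:ℝ) < s ^ (-a) := Real.rpow_pos_of_pos hs _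
    nlinarith
  have h3 : s ^ a * (-Real.log s) ≤ s ^ a * (s ^ (-a) / a) :=
    mul_le_mul_of_nonneg_left h2 (Real.rpow_pos_of_pos hs _).le
  have h4 : s ^ a * (s ^ (-a) / a) = 1 / a := by
    rw [← mul_div_assoc, ← Real.rpow_add hs]
    simp
  linarith

lemma rpow_log_abs_le {s η D : ℝ} (hη : 0 < η) (hs : 0 < s) (hsD : s ≤ D) :
    |s ^ η * Real.log s| ≤ 1 / η + D ^ η * |Real.log D| := by
  have hsp : (0:ℝ) < s ^ η := Real.rpow_pos_of_pos hs _
  rcases le_or_gt (Real.log s) 0 with h | h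
  · rw [abs_mul, abs_of_nonneg hsp.le, abs_of_nonpos h]
    have := rpow_neg_log_le hs hη
    have hD : 0 ≤ D ^ η * |Real.log D| :=
      mul_nonneg (Real.rpow_nonneg (le_trans hs.le hsD) _) (abs_nonneg _)
    linarith
  · have hs1 : 1 < s := by
      by_contra hc
      exact absurd (Real.log_nonpos hs.le (not_lt.mp hc)) (not_le.mpr h)
    have hD1 : 1 < D := lt_of_lt_of_le hs1 hsD
    have h1 : s ^ η ≤ D ^ η := Real.rpow_le_rpow hs.le hsD hη.le
    have h2 : Real.log s ≤ Real.log D := Real.log_le_log hs hsD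
    rw [abs_mul, abs_of_nonneg hsp.le, abs_of_nonneg h.le]
    have h3 : s ^ η * Real.log s ≤ D ^ η * |Real.log D| := by
      rw [abs_of_nonneg (Real.log_nonneg hD1.le)]
      exact mul_le_mul h1 h2 h.le (by positivity)
    have : 0 ≤ 1/η := by positivity
    linarith

lemma key_est {t : ℝ} (ht : 0 < t) (ht2 : t ≤ 1/2) :
    |binEnt (Real.exp (-t)) - (t - t * Real.log t)| ≤ 2 * t^2 * (1 - Real.log t) := by
  set u : ℝ := 1 - Real.exp (-t) with hu_def
  have hexp_pos : 0 < Real.exp (-t) := Real.exp_pos _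
  have hmul : Real.exp (-t) * Real.exp t = 1 := by rw [← Real.exp_add]; simp
  have hle1 : 1 + t ≤ Real.exp t := by have := Real.add_one_le_exp t; linarith
  have hu1 : u ≤ t := by
    have := Real.add_one_le_exp (-t); simp [hu_def]; linarith
  have hu2 : t - t^2 ≤ u := by nlinarith [Real.exp_pos t]
  have hu_pos : 0 < u := by nlinarith
  have hlogt : Real.log t ≤ 0 := Real.log_nonpos ht.le (by linarith)
  have hrw : binEnt (Real.exp (-t)) = t * Real.exp (-t) - u * Real.log u := by
    simp only [binEnt, Real.log_exp, hu_def]; ring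
  have hsplit : binEnt (Real.exp (-t)) - (t - t * Real.log t)
      = (t * Real.exp (-t) - t) + ((t - u) * Real.log t + u * (Real.log t - Real.log u)) := by
    rw [hrw]; ring
  have hA1 : |t * Real.exp (-t) - t| ≤ t^2 := by
    rw [abs_sub_comm, abs_of_nonneg (by nlinarith)]
    nlinarith
  have hA2 : |(t - u) * Real.log t| ≤ t^2 * (-Real.log t) := by
    rw [abs_mul, abs_of_nonneg (by linarith), abs_of_nonpos hlogt]
    nlinarith
  have hlogdiff : Real.log t - Real.log u ≤ (t - u) / u := by
    have h1 : Real.log (t / u) ≤ t / u - 1 := Real.log_le_sub_one_of_pos (div_pos ht hu_pos)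
    rw [Real.log_div ht.ne' hu_pos.ne'] at h1
    have : t / u - 1 = (t - u) / u := by field_simp
    linarith
  have hlogdiff0 : 0 ≤ Real.log t - Real.log u := by
    have := Real.log_le_log hu_pos hu1
    linarith
  have hA3 : |u * (Real.log t - Real.log u)| ≤ t^2 := by
    rw [abs_of_nonneg (by positivity)]
    have : u * (Real.log t - Real.log u) ≤ u * ((t - u) / u) :=
      mul_le_mul_of_nonneg_left hlogdiff hu_pos.le
    rw [mul_div_cancel₀ _ hu_pos.ne'] at this
    nlinarith
  calc |binEnt (Real.exp (-t)) - (t - t * Real.log t)|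
      ≤ |t * Real.exp (-t) - t| + (|(t - u) * Real.log t| + |u * (Real.log t - Real.log u)|) := by
        rw [hsplit]; exact (abs_add_le _ _).trans (by gcongr; exact abs_add_le _ _)
    _ ≤ t^2 + (t^2 * (-Real.log t) + t^2) := by gcongr
    _ ≤ 2 * t^2 * (1 - Real.log t) := by nlinarith

lemma pointwise_key {η D r₀ s : ℝ} (hη : 0 < η) (hD : 0 < D) (hr0_pos : 0 < r₀)
    (hL : 1 ≤ Real.log r₀) (hhalf : (D / r₀) ^ η ≤ 1/2)
    (hs0 : 0 ≤ s) (hsD : s ≤ D) :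
    |binEnt (Real.exp (-((s / r₀) ^ η)))
        - ((1 + η * Real.log r₀) / r₀ ^ η * s ^ η
            - η / r₀ ^ η * (s ^ η * Real.log s))|
      ≤ (2 * ((1 + η) * D ^ (2*η) + 1)) * r₀ ^ (-(2 * η)) * Real.log r₀ := by
  set C : ℝ := 2 * ((1 + η) * D ^ (2*η) + 1) with hC_def
  have hB : (0:ℝ) ≤ D ^ (2*η) := Real.rpow_nonneg hD.le _
  have hCpos : 0 < C := by positivity
  have hrp : (0:ℝ) < r₀ ^ (-(2*η)) := Real.rpow_pos_of_pos hr0_pos _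
  have hRHS : 0 ≤ C * r₀ ^ (-(2 * η)) * Real.log r₀ := by
    apply mul_nonneg (mul_nonneg hCpos.le hrp.le) (by linarith)
  rcases eq_or_lt_of_le hs0 with h0 | hs
  · rw [← h0]
    simp [binEnt, Real.zero_rpow hη.ne']
    exact hRHS
  · have hr0pow_pos : (0:ℝ) < r₀ ^ η := Real.rpow_pos_of_pos hr0_pos _
    set t := ((s / r₀) ^ η) with ht_def
    have ht_pos : 0 < t := Real.rpow_pos_of_pos (div_pos hs hr0_pos) _
    have ht_half : t ≤ 1/2 := by
      refine le_trans ?_ hhalf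
      exact Real.rpow_le_rpow (div_nonneg hs0 hr0_pos.le)
        (by gcongr) hη.le
    have hkey := key_est ht_pos ht_half
    have ht_eq : t = s ^ η / r₀ ^ η := Real.div_rpow hs0 hr0_pos.le _
    have hlogt : Real.log t = η * Real.log s - η * Real.log r₀ := by
      rw [ht_eq, Real.log_div (Real.rpow_pos_of_pos hs _).ne' hr0pow_pos.ne',
        Real.log_rpow hs, Real.log_rpow hr0_pos]
    have hid : t - t * Real.log t
        = (1 + η * Real.log r₀) / r₀ ^ η * s ^ η - η / r₀ ^ η * (s ^ η * Real.log s) := by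
      rw [hlogt, ht_eq]; field_simp; ring
    rw [← hid]
    refine hkey.trans ?_
    have hs2η : (s ^ η)^2 = s ^ (2*η) := by
      rw [← Real.rpow_natCast (s ^ η) 2, ← Real.rpow_mul hs0]
      norm_num [mul_comm]
    have hr2η : (r₀ ^ η)^2 = r₀ ^ (2*η) := by
      rw [← Real.rpow_natCast (r₀ ^ η) 2, ← Real.rpow_mul hr0_pos.le]
      norm_num [mul_comm]
    have hP : (0:ℝ) < r₀ ^ (2*η) := Real.rpow_pos_of_pos hr0_pos _
    have hneg : r₀ ^ (-(2*η)) = (r₀ ^ (2*η))⁻¹ := Real.rpow_neg hr0_pos.le _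
    have ht2 : t^2 = s^(2*η) / r₀^(2*η) := by rw [ht_eq, div_pow, hs2η, hr2η]
    have hbound1 : s ^ (2*η) ≤ D ^ (2*η) := Real.rpow_le_rpow hs0 hsD (by positivity)
    have hA : (0:ℝ) ≤ s ^ (2*η) := Real.rpow_nonneg hs0 _
    have hbound2 : 2 * η * (s ^ (2*η) * (-Real.log s)) ≤ 1 := by
      have := rpow_neg_log_le hs (show (0:ℝ) < 2*η by linarith)
      have h2η : (0:ℝ) < 2*η := by linarith
      rw [le_div_iff₀ h2η] at this
      linarith [this]
    rw [ht2, hlogt, hneg]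
    have step : 2 * (s^(2*η) / r₀^(2*η)) * (1 - (η * Real.log s - η * Real.log r₀))
        = (2 * s^(2*η) * (1 - (η * Real.log s - η * Real.log r₀))) / r₀^(2*η) := by ring
    have step2 : C * (r₀^(2*η))⁻¹ * Real.log r₀ = (C * Real.log r₀) / r₀^(2*η) := by ring
    rw [step, step2, div_le_div_iff_of_pos_right hP, hC_def]
    nlinarith [mul_nonneg hB (by linarith : (0:ℝ) ≤ Real.log r₀ - 1),
      mul_nonneg (mul_nonneg hη.le (sub_nonneg.mpr hbound1)) (by linarith : (0:ℝ) ≤ Real.log r₀)]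

theorem large_r0_entropy_expansion
    {Ω : Type*} [MeasurableSpace Ω] (μ : Measure Ω) [IsProbabilityMeasure μ]
    (η D : ℝ) (hη : 0 < η) (hD : 0 < D)
    (R : Ω → ℝ) (hR : Measurable R) (hR0 : ∀ ω, 0 ≤ R ω)
    (hRD : ∀ᵐ ω ∂μ, R ω ≤ D) :
    ∃ C : ℝ, ∃ r₁ : ℝ, 1 < r₁ ∧ ∀ r₀ : ℝ, r₁ ≤ r₀ →
      |(∫ ω, binEnt (Real.exp (-((R ω / r₀) ^ η))) ∂μ)
          - ((1 + η * Real.log r₀) / r₀ ^ η * (∫ ω, R ω ^ η ∂μ)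
              - η / r₀ ^ η * ∫ ω, R ω ^ η * Real.log (R ω) ∂μ)|
        ≤ C * r₀ ^ (-(2 * η)) * Real.log r₀ := by
  refine ⟨2 * ((1 + η) * D ^ (2*η) + 1), max (Real.exp 1) (D / (1/2 : ℝ) ^ η⁻¹), ?_, ?_⟩
  · have h1 : (1:ℝ) < Real.exp 1 := by
      have := Real.add_one_le_exp 1; linarith
    exact lt_of_lt_of_le h1 (le_max_left _ _)
  intro r₀ hr₀
  have hexp1 : Real.exp 1 ≤ r₀ := le_trans (le_max_left _ _) hr₀
  have hr0_pos : 0 < r₀ := lt_of_lt_of_le (Real.exp_pos 1) hexp1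
  have hL : 1 ≤ Real.log r₀ := (Real.le_log_iff_exp_le hr0_pos).mpr hexp1
  have hhalfpow : (0:ℝ) < (1/2:ℝ) ^ η⁻¹ := Real.rpow_pos_of_pos one_half_pos _
  have hDr : D / r₀ ≤ (1/2:ℝ) ^ η⁻¹ := by
    have h1 : D / (1/2:ℝ) ^ η⁻¹ ≤ r₀ := le_trans (le_max_right _ _) hr₀
    rw [div_le_iff₀ hhalfpow] at h1
    rw [div_le_iff₀ hr0_pos]
    nlinarith
  have hhalf : (D / r₀) ^ η ≤ 1/2 := by
    calc (D / r₀) ^ η ≤ ((1/2:ℝ) ^ η⁻¹) ^ η :=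
        Real.rpow_le_rpow (div_nonneg hD.le hr0_pos.le) hDr hη.le
      _ = 1/2 := Real.rpow_inv_rpow (by norm_num) hη.ne'
  set Cb : ℝ := (2 * ((1 + η) * D ^ (2*η) + 1)) * r₀ ^ (-(2 * η)) * Real.log r₀ with hCb_def
  set F : Ω → ℝ := fun ω => binEnt (Real.exp (-((R ω / r₀) ^ η))) with hF_def
  set G : Ω → ℝ := fun ω => (1 + η * Real.log r₀) / r₀ ^ η * R ω ^ η
      - η / r₀ ^ η * (R ω ^ η * Real.log (R ω)) with hG_def
  have hmeas1 : Measurable fun ω => R ω ^ η := by fun_prop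
  have hmeas2 : Measurable fun ω => R ω ^ η * Real.log (R ω) :=
    hmeas1.mul (Real.measurable_log.comp hR)
  have hmeasF : Measurable F := by
    apply measurable_binEnt.comp
    fun_prop
  have hmeasG : Measurable G := (hmeas1.const_mul _).sub (hmeas2.const_mul _)
  have hint1 : Integrable (fun ω => R ω ^ η) μ := by
    refine Integrable.mono' (integrable_const (D ^ η)) hmeas1.aestronglyMeasurable ?_
    filter_upwards [hRD] with ω hω
    rw [Real.norm_eq_abs, abs_of_nonneg (Real.rpow_nonneg (hR0 ω) _)]
    exact Real.rpow_le_rpow (hR0 ω) hω hη.le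
  have hint2 : Integrable (fun ω => R ω ^ η * Real.log (R ω)) μ := by
    refine Integrable.mono' (integrable_const (1/η + D ^ η * |Real.log D|))
      hmeas2.aestronglyMeasurable ?_
    filter_upwards [hRD] with ω hω
    rw [Real.norm_eq_abs]
    rcases eq_or_lt_of_le (hR0 ω) with h0 | h
    · rw [← h0]
      simp [Real.zero_rpow hη.ne']
      positivity
    · exact rpow_log_abs_le hη h hω
  have hG_int : Integrable G μ := (hint1.const_mul _).sub (hint2.const_mul _)
  have hFG_bound : ∀ᵐ ω ∂μ, ‖F ω - G ω‖ ≤ Cb := by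
    filter_upwards [hRD] with ω hω
    rw [Real.norm_eq_abs]
    exact pointwise_key hη hD hr0_pos hL hhalf (hR0 ω) hω
  have hFG_int : Integrable (fun ω => F ω - G ω) μ :=
    Integrable.mono' (integrable_const Cb)
      (hmeasF.sub hmeasG).aestronglyMeasurable hFG_bound
  have hF_int : Integrable F μ := by
    have h := hFG_int.add hG_int
    refine h.congr (Filter.Eventually.of_forall (fun ω => ?_))
    simp
  have hsplit : (1 + η * Real.log r₀) / r₀ ^ η * (∫ ω, R ω ^ η ∂μ)
      - η / r₀ ^ η * ∫ ω, R ω ^ η * Real.log (R ω) ∂μ = ∫ ω, G ω ∂μ := by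
    rw [hG_def, integral_sub (hint1.const_mul _) (hint2.const_mul _),
      integral_const_mul, integral_const_mul]
  rw [hsplit, ← integral_sub hF_int hG_int]
  have hfin := norm_integral_le_of_norm_le_const (μ := μ) hFG_bound
  rw [Real.norm_eq_abs] at hfin
  simpa [measure_univ] using hfin
end
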